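/- Let m ≥ 1 and let H be a real Hadamard matrix of order 4m whose first four rows equal Q ⊗ j_m, where Q is the 4 × 4 matrix with rows (1,1,1,1), (1,−1,1,−1), (1,1,−1,−1), (1,−1,−1,1) and j_m is the all-ones row vector of length m. Then for any c ∈ {1,2,3,4}, the matrix K obtained from H by negating every entry lying simultaneously in the first four rows and in the c-th block of m consecutive columns is a real Hadamard matrix of order 4m. -/

import Mathlib

/-- Switching a closed quadruple: if a real Hadamard matrix of order `4m` (rows indexed by
`Fin 4 ⊕ Fin (4*(m-1))`, columns by `Fin 4 × Fin m`) has first four rows `Q ⊗ j_m`, then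
negating the entries lying in the first four rows and in the `c₀`-th block of `m` columns
yields a real Hadamard matrix of order `4m`. -/
theorem stmt_16 (m : ℕ) (hm : 1 ≤ m)
    (Q : Matrix (Fin 4) (Fin 4) ℝ)
    (hQ : Q = !![1, 1, 1, 1; 1, -1, 1, -1; 1, 1, -1, -1; 1, -1, -1, 1])
    (H : Matrix (Fin 4 ⊕ Fin (4 * (m - 1))) (Fin 4 × Fin m) ℝ)
    (hent : ∀ r c, H r c = 1 ∨ H r c = -1)
    (hHad : H * H.transpose = ((4 * m : ℕ) : ℝ) • 1)
    (hrows : ∀ (i : Fin 4) (c : Fin 4) (u : Fin m), H (Sum.inl i) (c, u) = Q i c)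
    (c₀ : Fin 4)
    (K : Matrix (Fin 4 ⊕ Fin (4 * (m - 1))) (Fin 4 × Fin m) ℝ)
    (hK₁ : ∀ (i : Fin 4) (c : Fin 4) (u : Fin m), K (Sum.inl i) (c, u) =
      if c = c₀ then -H (Sum.inl i) (c, u) else H (Sum.inl i) (c, u))
    (hK₂ : ∀ (r : Fin (4 * (m - 1))) (c : Fin 4 × Fin m), K (Sum.inr r) c = H (Sum.inr r) c) :
    (∀ r c, K r c = 1 ∨ K r c = -1) ∧ K * K.transpose = ((4 * m : ℕ) : ℝ) • 1 := by
  -- block sums of lower rows vanish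
  have hS : ∀ (t : Fin (4 * (m - 1))) (c : Fin 4),
      (∑ u : Fin m, H (Sum.inr t) (c, u)) = 0 := by
    intro t c
    have key : ∀ i : Fin 4,
        (∑ d : Fin 4, Q i d * ∑ u : Fin m, H (Sum.inr t) (d, u)) = 0 := by
      intro i
      have h0 : (H * H.transpose) (Sum.inl i) (Sum.inr t) = 0 := by
        rw [hHad]
        simp [Matrix.one_apply]
      rw [Matrix.mul_apply] at h0
      rw [← h0]
      rw [Fintype.sum_prod_type]
      refine Finset.sum_congr rfl fun d _ => ?_
      rw [Finset.mul_sum]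
      refine Finset.sum_congr rfl fun u _ => ?_
      rw [Matrix.transpose_apply, hrows]
    have k0 := key 0
    have k1 := key 1
    have k2 := key 2
    have k3 := key 3
    simp only [hQ, Fin.sum_univ_four] at k0 k1 k2 k3
    norm_num [Matrix.vecHead, Matrix.vecTail] at k0 k1 k2 k3
    simp [Matrix.cons_val] at k0 k1 k2 k3
    fin_cases c <;>
      simp only [show (⟨0, by norm_num⟩ : Fin 4) = 0 from rfl,
        show (⟨1, by norm_num⟩ : Fin 4) = 1 from rfl,
        show (⟨2, by norm_num⟩ : Fin 4) = 2 from rfl,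
        show (⟨3, by norm_num⟩ : Fin 4) = 3 from rfl] <;> linarith
  constructor
  · rintro (i | t) ⟨c, u⟩
    · rw [hK₁]
      rcases hent (Sum.inl i) (c, u) with h | h <;> rw [h] <;>
        split <;> simp
    · rw [hK₂]; exact hent _ _
  · have : K * K.transpose = H * H.transpose := by
      ext r s
      rw [Matrix.mul_apply, Matrix.mul_apply]
      rcases r with i | t <;> rcases s with i' | t'
      · refine Finset.sum_congr rfl fun ⟨c, u⟩ _ => ?_
        rw [Matrix.transpose_apply, Matrix.transpose_apply, hK₁, hK₁]
        split <;> ring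
      · rw [Fintype.sum_prod_type, Fintype.sum_prod_type]
        refine Finset.sum_congr rfl fun c _ => ?_
        by_cases hc : c = c₀
        · subst hc
          have l1 : (∑ u : Fin m, K (Sum.inl i) (c, u) * K.transpose (c, u) (Sum.inr t')) = 0 := by
            have e : ∀ u : Fin m, K (Sum.inl i) (c, u) * K.transpose (c, u) (Sum.inr t') =
                -(Q i c * H (Sum.inr t') (c, u)) := by
              intro u
              rw [Matrix.transpose_apply, hK₁, hK₂, if_pos rfl, hrows]; ring
            rw [Finset.sum_congr rfl fun u _ => e u, Finset.sum_neg_distrib,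
              ← Finset.mul_sum, hS, mul_zero, neg_zero]
          have l2 : (∑ u : Fin m, H (Sum.inl i) (c, u) * H.transpose (c, u) (Sum.inr t')) = 0 := by
            simp only [Matrix.transpose_apply, hrows]
            rw [← Finset.mul_sum, hS, mul_zero]
          rw [l1, l2]
        · refine Finset.sum_congr rfl fun u _ => ?_
          rw [Matrix.transpose_apply, Matrix.transpose_apply, hK₁, hK₂, if_neg hc]
      · rw [Fintype.sum_prod_type, Fintype.sum_prod_type]
        refine Finset.sum_congr rfl fun c _ => ?_
        by_cases hc : c = c₀
        · subst hc
          have l1 : (∑ u : Fin m, K (Sum.inr t) (c, u) * K.transpose (c, u) (Sum.inl i')) = 0 := by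
            have e : ∀ u : Fin m, K (Sum.inr t) (c, u) * K.transpose (c, u) (Sum.inl i') =
                -(H (Sum.inr t) (c, u) * Q i' c) := by
              intro u
              rw [Matrix.transpose_apply, hK₁, hK₂, if_pos rfl, hrows]; ring
            rw [Finset.sum_congr rfl fun u _ => e u, Finset.sum_neg_distrib,
              ← Finset.sum_mul, hS, zero_mul, neg_zero]
          have l2 : (∑ u : Fin m, H (Sum.inr t) (c, u) * H.transpose (c, u) (Sum.inl i')) = 0 := by
            simp only [Matrix.transpose_apply, hrows]
            rw [← Finset.sum_mul, hS, zero_mul]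
          rw [l1, l2]
        · refine Finset.sum_congr rfl fun u _ => ?_
          rw [Matrix.transpose_apply, Matrix.transpose_apply, hK₂, hK₁, if_neg hc]
      · refine Finset.sum_congr rfl fun j _ => ?_
        rw [Matrix.transpose_apply, Matrix.transpose_apply, hK₂, hK₂]
    rw [this, hHad]
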